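/- arXiv:2311.08384 — 2 statements merged into one kernel-verified Lean document; each statement's English description precedes it below -/
import Mathlib

section
/- Softmax no-regret lemma: Let |A| = A ≥ 2, let T ≥ 4·log(A), and set η = (1−γ)·√(log(A)/T). Let f^1, …, f^T : S×A → ℝ satisfy |f^t(s,a)| ≤ 1/(1−γ) for all t, s, a, and let the policies π^1, …, π^T be generated by the softmax updates: π^1(·|s) is uniform on A for every s, and π^{t+1}(a|s) = π^t(a|s)·exp(η f^t(s,a)) / Σ_{a'} π^t(a'|s)·exp(η f^t(s,a')). Then for any comparator policy π^e, Σ_{t=1}^T E_{(s,a)∼d^{π^e}}[f^t(s,a) − f^t(s, π^t(s))] ≤ (2/(1−γ)) · √(log(A)·T). -/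
open Finset

structure FinMDP (S A : Type*) [Fintype S] [Fintype A] where
  P : S → A → S → ℝ
  P_nonneg : ∀ s a s', 0 ≤ P s a s'
  P_sum : ∀ s a, ∑ s', P s a s' = 1
  r : S → A → ℝ
  r_nonneg : ∀ s a, 0 ≤ r s a
  r_le_one : ∀ s a, r s a ≤ 1
  disc : ℝ
  disc_pos : 0 < disc
  disc_lt_one : disc < 1
  init : S → ℝ
  init_nonneg : ∀ s, 0 ≤ init s
  init_sum : ∑ s, init s = 1

variable {S A : Type*} [Fintype S] [Fintype A] [Nonempty S] [Nonempty A]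

/-- A policy assigns to each state a probability mass function over actions. -/
def IsPolicy (π : S → A → ℝ) : Prop :=
  (∀ s a, 0 ≤ π s a) ∧ ∀ s, ∑ a, π s a = 1

/-- The Bellman operator `T^π`. -/
noncomputable def FinMDP.bellman (M : FinMDP S A) (π f : S → A → ℝ) (s : S) (a : A) : ℝ :=
  M.r s a + M.disc * ∑ s', M.P s a s' * ∑ a', π s' a' * f s' a'

/-- `Q` is the action-value function of `π`, i.e. satisfies the Bellman equation. -/
def FinMDP.IsQ (M : FinMDP S A) (π Q : S → A → ℝ) : Prop :=
  ∀ s a, Q s a = M.bellman π Q s a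

/-- The state value `V^π(s)` induced by a `Q`-function. -/
noncomputable def vOf (π Q : S → A → ℝ) (s : S) : ℝ := ∑ a, π s a * Q s a

/-- The scalar value `V^π = E_{s ∼ μ₀}[V^π(s)]`. -/
noncomputable def FinMDP.scalarV (M : FinMDP S A) (π Q : S → A → ℝ) : ℝ :=
  ∑ s, M.init s * vOf π Q s

/-- Distribution of the state at time `t` under policy `π`. -/
noncomputable def FinMDP.stateDist (M : FinMDP S A) (π : S → A → ℝ) : ℕ → S → ℝ
  | 0 => M.init
  | (t + 1) => fun s' => ∑ s, ∑ a, FinMDP.stateDist M π t s * π s a * M.P s a s'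

/-- The discounted occupancy measure `d^π(s,a) = (1-γ) ∑_t γ^t Pr^π(s_t = s, a_t = a)`. -/
noncomputable def FinMDP.occ (M : FinMDP S A) (π : S → A → ℝ) (s : S) (a : A) : ℝ :=
  (1 - M.disc) * ∑' t : ℕ, M.disc ^ t * M.stateDist π t s * π s a


lemma exp_le_quad {x : ℝ} (hx : |x| ≤ 1) : Real.exp x ≤ 1 + x + x ^ 2 := by
  have h := Real.exp_bound hx (n := 3) (by norm_num)
  have h2 : Real.exp x - (1 + x + x ^ 2 / 2) ≤ |x| ^ 3 * (4 / (6 * 3)) := by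
    have := abs_le.mp h
    simp [Finset.sum_range_succ, Nat.factorial] at this ⊢
    nlinarith [this.2]
  have h3 : |x| ^ 3 ≤ x ^ 2 := by
    have : |x| ^ 3 ≤ |x| ^ 2 := pow_le_pow_of_le_one (abs_nonneg x) hx (by norm_num)
    simpa [sq_abs] using this
  nlinarith

lemma expw {A : Type*} [Fintype A] [Nonempty A] (T : ℕ) (hT : 1 ≤ T)
    (η B : ℝ) (hη : 0 < η) (hB : 0 < B) (hηB : η * B ≤ 1)
    (g : ℕ → A → ℝ) (hg : ∀ t ∈ Finset.Icc 1 T, ∀ a, |g t a| ≤ B)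
    (p : ℕ → A → ℝ) (hp1 : ∀ a, p 1 a = 1 / Fintype.card A)
    (hupd : ∀ t, 1 ≤ t → t < T → ∀ a,
      p (t + 1) a = p t a * Real.exp (η * g t a) / ∑ a', p t a' * Real.exp (η * g t a'))
    (q : A → ℝ) (hq0 : ∀ a, 0 ≤ q a) (hq1 : ∑ a, q a = 1) :
    ∑ t ∈ Finset.Icc 1 T, (∑ a, q a * g t a - ∑ a, p t a * g t a)
      ≤ Real.log (Fintype.card A) / η + η * T * B ^ 2 := by
  have hcard : (0:ℝ) < Fintype.card A := by
    exact_mod_cast Fintype.card_pos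
  set Z : ℕ → ℝ := fun t => ∑ a', p t a' * Real.exp (η * g t a') with hZ
  have hpdist : ∀ t, 1 ≤ t → t ≤ T → (∀ a, 0 ≤ p t a) ∧ ∑ a, p t a = 1 := by
    intro t ht
    induction t, ht using Nat.le_induction with
    | base =>
      intro _
      constructor
      · intro a; rw [hp1]; positivity
      · simp only [hp1, Finset.sum_const, Finset.card_univ, nsmul_eq_mul]
        field_simp
    | succ t ht ih =>
      intro hle
      have hlt : t < T := by omega
      obtain ⟨h0, h1⟩ := ih (by omega)
      have hZpos : 0 < Z t := by
        have hex : ∃ a ∈ Finset.univ (α := A), 0 < p t a := by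
          by_contra hc
          push_neg at hc
          have : ∑ a, p t a ≤ 0 :=
            Finset.sum_nonpos fun a _ => hc a (Finset.mem_univ a)
          linarith
        obtain ⟨a, _, ha⟩ := hex
        refine Finset.sum_pos' (fun a' _ => mul_nonneg (h0 a') (Real.exp_pos _).le)
          ⟨a, Finset.mem_univ a, mul_pos ha (Real.exp_pos _)⟩
      constructor
      · intro a; rw [hupd t ht hlt]
        exact div_nonneg (mul_nonneg (h0 a) (Real.exp_pos _).le) hZpos.le
      · rw [Finset.sum_congr rfl fun a _ => hupd t ht hlt a, ← Finset.sum_div]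
        exact div_self hZpos.ne'
  have hZpos : ∀ t, 1 ≤ t → t ≤ T → 0 < Z t := by
    intro t h1 h2
    obtain ⟨h0, hs⟩ := hpdist t h1 h2
    have hex : ∃ a ∈ Finset.univ (α := A), 0 < p t a := by
      by_contra hc
      push_neg at hc
      have : ∑ a, p t a ≤ 0 := Finset.sum_nonpos fun a _ => hc a (Finset.mem_univ a)
      linarith
    obtain ⟨a, _, ha⟩ := hex
    exact Finset.sum_pos' (fun a' _ => mul_nonneg (h0 a') (Real.exp_pos _).le)
      ⟨a, Finset.mem_univ a, mul_pos ha (Real.exp_pos _)⟩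
  have hpot : ∀ k, k + 1 ≤ T → ∀ a,
      p (k+1) a * ∏ τ ∈ Finset.Icc 1 k, Z τ
        = (1 / Fintype.card A) * Real.exp (η * ∑ τ ∈ Finset.Icc 1 k, g τ a) := by
    intro k
    induction k with
    | zero => intro _ a; simp [hp1]
    | succ k ih =>
      intro hk a
      have hih := ih (by omega) a
      have hZne := (hZpos (k+1) (by omega) (by omega)).ne'
      rw [hupd (k+1) (by omega) (by omega) a,
        Finset.prod_Icc_succ_top (by omega : 1 ≤ k + 1),
        Finset.sum_Icc_succ_top (by omega : 1 ≤ k + 1), mul_add, Real.exp_add]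
      have hcancel : p (k+1) a * Real.exp (η * g (k+1) a) / Z (k+1)
          * ((∏ τ ∈ Finset.Icc 1 k, Z τ) * Z (k+1))
          = (p (k+1) a * ∏ τ ∈ Finset.Icc 1 k, Z τ) * Real.exp (η * g (k+1) a) := by
        field_simp
      rw [hcancel, hih]
      ring
  have hZlog : ∀ t, 1 ≤ t → t ≤ T →
      Real.log (Z t) ≤ η * (∑ a, p t a * g t a) + η^2 * B^2 := by
    intro t h1 h2
    obtain ⟨h0, hs⟩ := hpdist t h1 h2
    have hZp := hZpos t h1 h2
    have hZle : Z t ≤ 1 + η * (∑ a, p t a * g t a) + η^2 * B^2 := by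
      have step1 : Z t ≤ ∑ a, p t a * (1 + η * g t a + (η * g t a)^2) := by
        refine Finset.sum_le_sum fun a _ => ?_
        refine mul_le_mul_of_nonneg_left ?_ (h0 a)
        refine exp_le_quad ?_
        rw [abs_mul, abs_of_pos hη]
        calc η * |g t a| ≤ η * B := by
              have := hg t (Finset.mem_Icc.mpr ⟨h1, h2⟩) a
              nlinarith
          _ ≤ 1 := hηB
      have step2 : ∑ a, p t a * (1 + η * g t a + (η * g t a)^2)
          = 1 + η * (∑ a, p t a * g t a) + η^2 * ∑ a, p t a * (g t a)^2 := by
        have he : ∀ a : A, p t a * (1 + η * g t a + (η * g t a)^2)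
            = p t a + η * (p t a * g t a) + η^2 * (p t a * (g t a)^2) := fun a => by ring
        rw [Finset.sum_congr rfl fun a _ => he a, Finset.sum_add_distrib,
          Finset.sum_add_distrib, hs, ← Finset.mul_sum, ← Finset.mul_sum]
      have step3 : ∑ a, p t a * (g t a)^2 ≤ B^2 := by
        calc ∑ a, p t a * (g t a)^2 ≤ ∑ a, p t a * B^2 := by
              refine Finset.sum_le_sum fun a _ => ?_
              refine mul_le_mul_of_nonneg_left ?_ (h0 a)
              have := hg t (Finset.mem_Icc.mpr ⟨h1, h2⟩) a
              nlinarith [abs_nonneg (g t a), neg_abs_le (g t a), le_abs_self (g t a)]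
          _ = B^2 := by rw [← Finset.sum_mul, hs, one_mul]
      calc Z t ≤ _ := step1
        _ = _ := step2
        _ ≤ 1 + η * (∑ a, p t a * g t a) + η^2 * B^2 := by nlinarith
    calc Real.log (Z t) ≤ Z t - 1 := Real.log_le_sub_one_of_pos hZp
      _ ≤ _ := by linarith
  have hmain : ∀ a, (∑ t ∈ Finset.Icc 1 T, g t a) - ∑ t ∈ Finset.Icc 1 T, ∑ a', p t a' * g t a'
      ≤ Real.log (Fintype.card A) / η + η * T * B ^ 2 := by
    intro a
    obtain ⟨k, rfl⟩ : ∃ k, T = k + 1 := ⟨T - 1, by omega⟩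
    have hpot' := hpot k (by omega) a
    have key : (1 / Fintype.card A : ℝ) * Real.exp (η * ∑ t ∈ Finset.Icc 1 (k+1), g t a)
        ≤ ∏ t ∈ Finset.Icc 1 (k+1), Z t := by
      rw [Finset.sum_Icc_succ_top (by omega : 1 ≤ k + 1),
        Finset.prod_Icc_succ_top (by omega : 1 ≤ k + 1), mul_add, Real.exp_add,
        ← mul_assoc, ← hpot']
      have hple : p (k+1) a * Real.exp (η * g (k+1) a) ≤ Z (k+1) := by
        refine Finset.single_le_sum (f := fun a' => p (k+1) a' * Real.exp (η * g (k+1) a'))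
          (fun a' _ => ?_) (Finset.mem_univ a)
        have := (hpdist (k+1) (by omega) le_rfl).1 a'
        positivity
      have hprodpos : 0 ≤ ∏ τ ∈ Finset.Icc 1 k, Z τ := by
        refine Finset.prod_nonneg fun τ hτ => ?_
        obtain ⟨hτ1, hτ2⟩ := Finset.mem_Icc.mp hτ
        exact (hZpos τ hτ1 (by omega)).le
      calc p (k+1) a * (∏ τ ∈ Finset.Icc 1 k, Z τ) * Real.exp (η * g (k+1) a)
          = p (k+1) a * Real.exp (η * g (k+1) a) * ∏ τ ∈ Finset.Icc 1 k, Z τ := by ring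
        _ ≤ Z (k+1) * ∏ τ ∈ Finset.Icc 1 k, Z τ :=
            mul_le_mul_of_nonneg_right hple hprodpos
        _ = (∏ τ ∈ Finset.Icc 1 k, Z τ) * Z (k+1) := mul_comm _ _
    have hLpos : (0:ℝ) < (1 / Fintype.card A : ℝ) * Real.exp (η * ∑ t ∈ Finset.Icc 1 (k+1), g t a) := by
      positivity
    have hlog := Real.log_le_log hLpos key
    rw [Real.log_mul (by positivity) (Real.exp_pos _).ne', Real.log_exp,
      Real.log_prod (fun τ hτ => by
        obtain ⟨hτ1, hτ2⟩ := Finset.mem_Icc.mp hτ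
        exact (hZpos τ hτ1 hτ2).ne'), one_div, Real.log_inv] at hlog
    have hsumlog : ∑ τ ∈ Finset.Icc 1 (k+1), Real.log (Z τ)
        ≤ η * (∑ t ∈ Finset.Icc 1 (k+1), ∑ a', p t a' * g t a') + (k+1) * (η^2 * B^2) := by
      calc ∑ τ ∈ Finset.Icc 1 (k+1), Real.log (Z τ)
          ≤ ∑ τ ∈ Finset.Icc 1 (k+1), (η * (∑ a', p τ a' * g τ a') + η^2 * B^2) := by
            refine Finset.sum_le_sum fun τ hτ => ?_
            obtain ⟨hτ1, hτ2⟩ := Finset.mem_Icc.mp hτ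
            exact hZlog τ hτ1 hτ2
        _ = η * (∑ t ∈ Finset.Icc 1 (k+1), ∑ a', p t a' * g t a') + (k+1) * (η^2 * B^2) := by
            rw [Finset.sum_add_distrib, Finset.sum_const, ← Finset.mul_sum]
            simp [Nat.card_Icc]
    have hηmul : η * ((∑ t ∈ Finset.Icc 1 (k+1), g t a)
        - ∑ t ∈ Finset.Icc 1 (k+1), ∑ a', p t a' * g t a')
        ≤ Real.log (Fintype.card A) + η^2 * ((k+1) * B^2) := by
      nlinarith [hlog, hsumlog]
    rw [← le_div_iff₀' hη] at hηmul
    calc (∑ t ∈ Finset.Icc 1 (k+1), g t a) - ∑ t ∈ Finset.Icc 1 (k+1), ∑ a', p t a' * g t a'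
        ≤ (Real.log (Fintype.card A) + η^2 * ((k+1) * B^2)) / η := hηmul
      _ = Real.log (Fintype.card A) / η + η * (↑(k+1)) * B ^ 2 := by
          field_simp
          push_cast
          ring
  -- mixing with q
  have hswap : ∑ t ∈ Finset.Icc 1 T, (∑ a, q a * g t a - ∑ a, p t a * g t a)
      = ∑ a, q a * ((∑ t ∈ Finset.Icc 1 T, g t a) - ∑ t ∈ Finset.Icc 1 T, ∑ a', p t a' * g t a') := by
    have h1 : ∑ t ∈ Finset.Icc 1 T, ∑ a, q a * g t a
        = ∑ a, q a * ∑ t ∈ Finset.Icc 1 T, g t a := by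
      rw [Finset.sum_comm]
      exact Finset.sum_congr rfl fun a _ => by rw [Finset.mul_sum]
    have h3 : ∑ a, q a * ((∑ t ∈ Finset.Icc 1 T, g t a)
          - ∑ t ∈ Finset.Icc 1 T, ∑ a', p t a' * g t a')
        = (∑ a, q a * ∑ t ∈ Finset.Icc 1 T, g t a)
          - ∑ t ∈ Finset.Icc 1 T, ∑ a', p t a' * g t a' := by
      simp only [mul_sub]
      rw [Finset.sum_sub_distrib, ← Finset.sum_mul, hq1, one_mul]
    rw [h3, Finset.sum_sub_distrib, h1]
  rw [hswap]
  calc ∑ a, q a * ((∑ t ∈ Finset.Icc 1 T, g t a) - ∑ t ∈ Finset.Icc 1 T, ∑ a', p t a' * g t a')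
      ≤ ∑ a, q a * (Real.log (Fintype.card A) / η + η * T * B ^ 2) := by
        refine Finset.sum_le_sum fun a _ => mul_le_mul_of_nonneg_left (hmain a) (hq0 a)
    _ = Real.log (Fintype.card A) / η + η * T * B ^ 2 := by
        rw [← Finset.sum_mul, hq1, one_mul]

lemma sd_nonneg {S A : Type*} [Fintype S] [Fintype A] (M : FinMDP S A)
    {π : S → A → ℝ} (hπ : IsPolicy π) : ∀ t s, 0 ≤ M.stateDist π t s := by
  intro t
  induction t with
  | zero => exact M.init_nonneg
  | succ t ih =>
    intro s'
    refine Finset.sum_nonneg fun s _ => Finset.sum_nonneg fun a _ => ?_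
    exact mul_nonneg (mul_nonneg (ih s) (hπ.1 s a)) (M.P_nonneg s a s')

lemma sd_sum {S A : Type*} [Fintype S] [Fintype A] (M : FinMDP S A)
    {π : S → A → ℝ} (hπ : IsPolicy π) : ∀ t, ∑ s, M.stateDist π t s = 1 := by
  intro t
  induction t with
  | zero => exact M.init_sum
  | succ t ih =>
    show ∑ s', ∑ s, ∑ a, M.stateDist π t s * π s a * M.P s a s' = 1
    rw [Finset.sum_comm]
    calc ∑ s, ∑ s', ∑ a, M.stateDist π t s * π s a * M.P s a s'
        = ∑ s, M.stateDist π t s := by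
          refine Finset.sum_congr rfl fun s _ => ?_
          rw [Finset.sum_comm]
          calc ∑ a, ∑ s', M.stateDist π t s * π s a * M.P s a s'
              = ∑ a, M.stateDist π t s * π s a := by
                refine Finset.sum_congr rfl fun a _ => ?_
                rw [← Finset.mul_sum, M.P_sum, mul_one]
            _ = M.stateDist π t s := by rw [← Finset.mul_sum, hπ.2, mul_one]
      _ = 1 := ih

/-- Softmax no-regret lemma. -/
theorem stmt4 (M : FinMDP S A) (hA : 2 ≤ Fintype.card A) (T : ℕ)
    (hT : 4 * Real.log (Fintype.card A) ≤ (T : ℝ))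
    (η : ℝ) (hη : η = (1 - M.disc) * Real.sqrt (Real.log (Fintype.card A) / T))
    (f : ℕ → S → A → ℝ)
    (hf : ∀ t ∈ Finset.Icc 1 T, ∀ s a, |f t s a| ≤ 1 / (1 - M.disc))
    (π : ℕ → S → A → ℝ)
    (hπ1 : ∀ s a, π 1 s a = 1 / Fintype.card A)
    (hupd : ∀ t, 1 ≤ t → t < T → ∀ s a,
      π (t + 1) s a =
        π t s a * Real.exp (η * f t s a) / ∑ a', π t s a' * Real.exp (η * f t s a'))
    (πe : S → A → ℝ) (hπe : IsPolicy πe) :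
    ∑ t ∈ Finset.Icc 1 T, ∑ s, ∑ a, M.occ πe s a * (f t s a - ∑ a', π t s a' * f t s a')
      ≤ (2 / (1 - M.disc)) * Real.sqrt (Real.log (Fintype.card A) * T) := by
  classical
  have hγ : 0 < 1 - M.disc := by linarith [M.disc_lt_one]
  have hA1 : (1:ℝ) < Fintype.card A := by exact_mod_cast hA
  have hL : 0 < Real.log (Fintype.card A) := Real.log_pos hA1
  have hTpos : (0:ℝ) < T := lt_of_lt_of_le (by positivity) hT
  have hT1 : 1 ≤ T := by exact_mod_cast Nat.cast_pos.mp hTpos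
  set B : ℝ := 1 / (1 - M.disc) with hB
  have hBpos : 0 < B := by positivity
  have hLT : Real.log (Fintype.card A) / T ≤ 1 / 4 := by
    rw [div_le_iff₀ hTpos]
    linarith
  have hηpos : 0 < η := by
    rw [hη]
    have : 0 < Real.log (Fintype.card A) / T := by positivity
    positivity
  have hηB : η * B ≤ 1 := by
    have hsq : Real.sqrt (Real.log (Fintype.card A) / T) ≤ 1 / 2 := by
      have := Real.sqrt_le_sqrt hLT
      calc Real.sqrt (Real.log (Fintype.card A) / T) ≤ Real.sqrt (1/4) := this
        _ = 1 / 2 := by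
          rw [show (1/4 : ℝ) = (1/2)^2 by norm_num, Real.sqrt_sq (by norm_num)]
    rw [hη, hB]
    calc (1 - M.disc) * Real.sqrt (Real.log (Fintype.card A) / T) * (1 / (1 - M.disc))
        = Real.sqrt (Real.log (Fintype.card A) / T) := by field_simp
      _ ≤ 1 := by linarith
  -- per-state regret bound
  have hstate : ∀ s, ∑ t ∈ Finset.Icc 1 T,
      (∑ a, πe s a * f t s a - ∑ a, π t s a * f t s a)
      ≤ Real.log (Fintype.card A) / η + η * T * B ^ 2 := by
    intro s
    exact expw T hT1 η B hηpos hBpos hηB (fun t a => f t s a)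
      (fun t ht a => hf t ht s a) (fun t a => π t s a)
      (fun a => hπ1 s a) (fun t ht hlt a => hupd t ht hlt s a)
      (πe s) (fun a => hπe.1 s a) (hπe.2 s)
  -- occupancy measure facts
  set c : S → ℝ := fun s => (1 - M.disc) * ∑' t : ℕ, M.disc ^ t * M.stateDist πe t s
    with hc
  have hsumm : ∀ s, Summable (fun t : ℕ => M.disc ^ t * M.stateDist πe t s) := by
    intro s
    refine Summable.of_nonneg_of_le
      (fun t => mul_nonneg (pow_nonneg M.disc_pos.le t) (sd_nonneg M hπe t s))
      (fun t => ?_) (summable_geometric_of_lt_one M.disc_pos.le M.disc_lt_one)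
    have hle1 : M.stateDist πe t s ≤ 1 := by
      have := sd_sum M hπe t
      have h0 := sd_nonneg M hπe t
      calc M.stateDist πe t s ≤ ∑ s', M.stateDist πe t s' :=
            Finset.single_le_sum (fun s' _ => h0 s') (Finset.mem_univ s)
        _ = 1 := this
    calc M.disc ^ t * M.stateDist πe t s ≤ M.disc ^ t * 1 :=
          mul_le_mul_of_nonneg_left hle1 (pow_nonneg M.disc_pos.le t)
      _ = M.disc ^ t := mul_one _
  have hocc : ∀ s a, M.occ πe s a = c s * πe s a := by
    intro s a
    rw [FinMDP.occ, hc]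
    rw [show (fun t : ℕ => M.disc ^ t * M.stateDist πe t s * πe s a)
      = fun t : ℕ => (M.disc ^ t * M.stateDist πe t s) * πe s a from rfl]
    rw [tsum_mul_right]
    ring
  have hc0 : ∀ s, 0 ≤ c s := by
    intro s
    refine mul_nonneg hγ.le (tsum_nonneg fun t => ?_)
    exact mul_nonneg (pow_nonneg M.disc_pos.le t) (sd_nonneg M hπe t s)
  have hcsum : ∑ s, c s = 1 := by
    rw [hc, ← Finset.mul_sum]
    have hswap : ∑ s, ∑' t : ℕ, M.disc ^ t * M.stateDist πe t s
        = ∑' t : ℕ, ∑ s, M.disc ^ t * M.stateDist πe t s :=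
      (Summable.tsum_finsetSum fun s _ => hsumm s).symm
    rw [hswap]
    have : ∀ t : ℕ, ∑ s, M.disc ^ t * M.stateDist πe t s = M.disc ^ t := by
      intro t
      rw [← Finset.mul_sum, sd_sum M hπe t, mul_one]
    rw [tsum_congr this, tsum_geometric_of_lt_one M.disc_pos.le M.disc_lt_one]
    field_simp
  -- rewrite LHS
  have hLHS : ∑ t ∈ Finset.Icc 1 T, ∑ s, ∑ a,
      M.occ πe s a * (f t s a - ∑ a', π t s a' * f t s a')
      = ∑ s, c s * ∑ t ∈ Finset.Icc 1 T,
        (∑ a, πe s a * f t s a - ∑ a, π t s a * f t s a) := by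
    rw [Finset.sum_comm]
    refine Finset.sum_congr rfl fun s _ => ?_
    rw [Finset.mul_sum]
    refine Finset.sum_congr rfl fun t _ => ?_
    have he : ∀ a : A, M.occ πe s a * (f t s a - ∑ a', π t s a' * f t s a')
        = c s * (πe s a * f t s a)
          - (c s * πe s a) * ∑ a', π t s a' * f t s a' := fun a => by
      rw [hocc]; ring
    rw [Finset.sum_congr rfl fun a _ => he a, Finset.sum_sub_distrib,
      ← Finset.mul_sum]
    have h2 : ∑ a, c s * πe s a * ∑ a', π t s a' * f t s a'
        = c s * ∑ a, π t s a * f t s a := by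
      rw [← Finset.sum_mul]
      rw [← Finset.mul_sum, hπe.2 s, mul_one]
    rw [h2, ← mul_sub]
  rw [hLHS]
  -- numeric identity for the bound
  have hnum : Real.log (Fintype.card A) / η + η * T * B ^ 2
      = (2 / (1 - M.disc)) * Real.sqrt (Real.log (Fintype.card A) * T) := by
    set L : ℝ := Real.log (Fintype.card A) with hLdef
    have hsL : Real.sqrt L ^ 2 = L := Real.sq_sqrt hL.le
    have hsT : Real.sqrt T ^ 2 = (T:ℝ) := Real.sq_sqrt hTpos.le
    have hsLpos : 0 < Real.sqrt L := Real.sqrt_pos.mpr hL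
    have hsTpos : 0 < Real.sqrt (T:ℝ) := Real.sqrt_pos.mpr hTpos
    have hdiv : Real.sqrt (L / T) = Real.sqrt L / Real.sqrt T := Real.sqrt_div hL.le T
    have hmul : Real.sqrt (L * T) = Real.sqrt L * Real.sqrt T := Real.sqrt_mul hL.le T
    rw [hη, hB, hdiv, hmul]
    field_simp
    linear_combination (-(Real.sqrt (T:ℝ)^2)) * hsL
      + (-(Real.sqrt L^2)) * hsT
  rw [← hnum]
  calc ∑ s, c s * ∑ t ∈ Finset.Icc 1 T,
        (∑ a, πe s a * f t s a - ∑ a, π t s a * f t s a)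
      ≤ ∑ s, c s * (Real.log (Fintype.card A) / η + η * T * B ^ 2) :=
        Finset.sum_le_sum fun s _ => mul_le_mul_of_nonneg_left (hstate s) (hc0 s)
    _ = Real.log (Fintype.card A) / η + η * T * B ^ 2 := by
        rw [← Finset.sum_mul, hcsum, one_mul]
end

section
/- Approximate-backup error recursion: Let π be a policy of a finite discounted MDP, let ε_be ∈ [0, 2/(1−γ)], and let f', g : S×A → [0, 1/(1−γ)] satisfy |g(s,a) − (T^π f')(s,a)| ≤ ε_be for all (s,a). Then E_{(s,a)∼d^π}[(g(s,a) − Q^π(s,a))²] ≤ 4·ε_be/(1−γ) + γ · E_{(s,a)∼d^π}[(f'(s,a) − Q^π(s,a))²]. -/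
open Finset

variable {S A : Type*} [Fintype S] [Fintype A] [Nonempty S] [Nonempty A]

set_option linter.unusedVariables false
set_option linter.unusedSectionVars false

/-- Weighted sums over a finite type. -/
lemma wsum_nonneg {ι : Type*} [Fintype ι] (w x : ι → ℝ) (hw : ∀ i, 0 ≤ w i)
    (hx : ∀ i, 0 ≤ x i) : 0 ≤ ∑ i, w i * x i :=
  Finset.sum_nonneg fun i _ => mul_nonneg (hw i) (hx i)

lemma wsum_le {ι : Type*} [Fintype ι] (w x : ι → ℝ) (hw : ∀ i, 0 ≤ w i)
    (hw1 : ∑ i, w i = 1) (C : ℝ) (hx : ∀ i, x i ≤ C) : ∑ i, w i * x i ≤ C := by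
  calc ∑ i, w i * x i ≤ ∑ i, w i * C :=
        Finset.sum_le_sum fun i _ => mul_le_mul_of_nonneg_left (hx i) (hw i)
    _ = C := by rw [← Finset.sum_mul, hw1, one_mul]

lemma wsum_ge {ι : Type*} [Fintype ι] (w x : ι → ℝ) (hw : ∀ i, 0 ≤ w i)
    (hw1 : ∑ i, w i = 1) (C : ℝ) (hx : ∀ i, C ≤ x i) : C ≤ ∑ i, w i * x i := by
  have := wsum_le w (fun i => -x i) hw hw1 (-C) (fun i => neg_le_neg (hx i))
  simp only [mul_neg, Finset.sum_neg_distrib] at this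
  linarith

lemma wsum_abs_le {ι : Type*} [Fintype ι] (w x : ι → ℝ) (hw : ∀ i, 0 ≤ w i)
    (hw1 : ∑ i, w i = 1) (C : ℝ) (hx : ∀ i, |x i| ≤ C) : |∑ i, w i * x i| ≤ C := by
  rw [abs_le]
  constructor
  · exact wsum_ge w x hw hw1 (-C) fun i => (abs_le.mp (hx i)).1
  · exact wsum_le w x hw hw1 C fun i => (abs_le.mp (hx i)).2

lemma wsum_jensen {ι : Type*} [Fintype ι] (w x : ι → ℝ) (hw : ∀ i, 0 ≤ w i)
    (hw1 : ∑ i, w i = 1) : (∑ i, w i * x i) ^ 2 ≤ ∑ i, w i * x i ^ 2 := by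
  have h := Finset.sum_mul_sq_le_sq_mul_sq Finset.univ (fun i => Real.sqrt (w i))
    (fun i => Real.sqrt (w i) * x i)
  have e1 : ∀ i : ι, Real.sqrt (w i) * (Real.sqrt (w i) * x i) = w i * x i := fun i => by
    rw [← mul_assoc, Real.mul_self_sqrt (hw i)]
  have e2 : ∀ i : ι, Real.sqrt (w i) ^ 2 = w i := fun i => Real.sq_sqrt (hw i)
  have e3 : ∀ i : ι, (Real.sqrt (w i) * x i) ^ 2 = w i * x i ^ 2 := fun i => by
    rw [mul_pow, e2]
  simp only [e1, e2, e3] at h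
  rw [hw1, one_mul] at h
  exact h
/-- Product-form weights for the one-step expectation. -/
noncomputable def FinMDP.wt (M : FinMDP S A) (π : S → A → ℝ) (s : S) (a : A)
    (p : S × A) : ℝ := M.P s a p.1 * π p.1 p.2

lemma wt_nonneg (M : FinMDP S A) (π : S → A → ℝ) (hπ : IsPolicy π) (s : S) (a : A)
    (p : S × A) : 0 ≤ M.wt π s a p := mul_nonneg (M.P_nonneg s a p.1) (hπ.1 p.1 p.2)

lemma wt_sum_one (M : FinMDP S A) (π : S → A → ℝ) (hπ : IsPolicy π) (s : S) (a : A) :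
    ∑ p : S × A, M.wt π s a p = 1 := by
  rw [Fintype.sum_prod_type]
  simp only [FinMDP.wt]
  have : ∀ s' : S, ∑ a' : A, M.P s a s' * π s' a' = M.P s a s' := fun s' => by
    rw [← Finset.mul_sum, hπ.2 s', mul_one]
  simp only [this]
  exact M.P_sum s a

lemma exp_eq (M : FinMDP S A) (π : S → A → ℝ) (s : S) (a : A) (h : S → A → ℝ) :
    ∑ s', M.P s a s' * ∑ a', π s' a' * h s' a'
      = ∑ p : S × A, M.wt π s a p * h p.1 p.2 := by
  rw [Fintype.sum_prod_type]
  exact Finset.sum_congr rfl fun s' _ => by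
    rw [Finset.mul_sum]
    exact Finset.sum_congr rfl fun a' _ => by rw [FinMDP.wt, mul_assoc]

lemma q_bounds (M : FinMDP S A) (π Q : S → A → ℝ) (hπ : IsPolicy π) (hQ : M.IsQ π Q) :
    ∀ s a, Q s a ∈ Set.Icc 0 (1 / (1 - M.disc)) := by
  have hγ1 : (0:ℝ) < 1 - M.disc := by linarith [M.disc_lt_one]
  have key : ∀ s a, Q s a = M.r s a + M.disc * ∑ p : S × A, M.wt π s a p * Q p.1 p.2 :=
    fun s a => by rw [hQ s a, FinMDP.bellman, exp_eq]
  -- min bound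
  have hmin : ∀ s a, 0 ≤ Q s a := by
    obtain ⟨p0, _, hp0⟩ := Finset.exists_min_image Finset.univ (fun p : S × A => Q p.1 p.2)
      Finset.univ_nonempty
    have hm : ∀ s a, Q p0.1 p0.2 ≤ Q s a := fun s a => hp0 (s, a) (Finset.mem_univ _)
    have h1 : Q p0.1 p0.2 ≤ ∑ p : S × A, M.wt π p0.1 p0.2 p * Q p.1 p.2 :=
      wsum_ge _ _ (wt_nonneg M π hπ _ _) (wt_sum_one M π hπ _ _) _ (fun p => hm p.1 p.2)
    have h2 : Q p0.1 p0.2 ≥ M.disc * Q p0.1 p0.2 := by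
      have := key p0.1 p0.2
      nlinarith [M.r_nonneg p0.1 p0.2, M.disc_pos]
    have h3 : 0 ≤ Q p0.1 p0.2 := by nlinarith [M.disc_lt_one]
    exact fun s a => le_trans h3 (hm s a)
  have hmax : ∀ s a, Q s a ≤ 1 / (1 - M.disc) := by
    obtain ⟨p0, _, hp0⟩ := Finset.exists_max_image Finset.univ (fun p : S × A => Q p.1 p.2)
      Finset.univ_nonempty
    have hm : ∀ s a, Q s a ≤ Q p0.1 p0.2 := fun s a => hp0 (s, a) (Finset.mem_univ _)
    have h1 : ∑ p : S × A, M.wt π p0.1 p0.2 p * Q p.1 p.2 ≤ Q p0.1 p0.2 :=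
      wsum_le _ _ (wt_nonneg M π hπ _ _) (wt_sum_one M π hπ _ _) _ (fun p => hm p.1 p.2)
    have h2 : Q p0.1 p0.2 ≤ 1 + M.disc * Q p0.1 p0.2 := by
      have := key p0.1 p0.2
      nlinarith [M.r_le_one p0.1 p0.2, M.disc_pos]
    have h3 : Q p0.1 p0.2 ≤ 1 / (1 - M.disc) := by
      rw [le_div_iff₀ hγ1]; nlinarith
    exact fun s a => le_trans (hm s a) h3
  exact fun s a => ⟨hmin s a, hmax s a⟩

lemma pi_le_one (π : S → A → ℝ) (hπ : IsPolicy π) (s : S) (a : A) : π s a ≤ 1 := by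
  have := Finset.single_le_sum (f := fun a => π s a) (fun i _ => hπ.1 s i) (Finset.mem_univ a)
  rw [hπ.2 s] at this; exact this

lemma stateDist_nonneg (M : FinMDP S A) (π : S → A → ℝ) (hπ : IsPolicy π) :
    ∀ t s, 0 ≤ M.stateDist π t s := by
  intro t
  induction t with
  | zero => exact M.init_nonneg
  | succ t ih =>
    intro s'
    exact Finset.sum_nonneg fun s _ => Finset.sum_nonneg fun a _ =>
      mul_nonneg (mul_nonneg (ih s) (hπ.1 s a)) (M.P_nonneg s a s')

lemma stateDist_sum (M : FinMDP S A) (π : S → A → ℝ) (hπ : IsPolicy π) :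
    ∀ t, ∑ s, M.stateDist π t s = 1 := by
  intro t
  induction t with
  | zero => exact M.init_sum
  | succ t ih =>
    show ∑ s', ∑ s, ∑ a, M.stateDist π t s * π s a * M.P s a s' = 1
    rw [Finset.sum_comm]
    have h1 : ∀ s : S, ∑ s', ∑ a, M.stateDist π t s * π s a * M.P s a s'
        = M.stateDist π t s := by
      intro s
      rw [Finset.sum_comm]
      have : ∀ a : A, ∑ s', M.stateDist π t s * π s a * M.P s a s'
          = M.stateDist π t s * π s a := fun a => by
        rw [← Finset.mul_sum, M.P_sum, mul_one]
      simp only [this, ← Finset.mul_sum, hπ.2 s, mul_one]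
    simp only [h1, ih]

lemma stateDist_le_one (M : FinMDP S A) (π : S → A → ℝ) (hπ : IsPolicy π) (t : ℕ) (s : S) :
    M.stateDist π t s ≤ 1 := by
  have := Finset.single_le_sum (f := fun s => M.stateDist π t s)
    (fun i _ => stateDist_nonneg M π hπ t i) (Finset.mem_univ s)
  rw [stateDist_sum M π hπ t] at this; exact this

/-- Summability of the occupancy series against a bounded function. -/
lemma occ_summable (M : FinMDP S A) (π : S → A → ℝ) (hπ : IsPolicy π)
    (h : S → A → ℝ) (C : ℝ) (hh0 : ∀ s a, 0 ≤ h s a) (hhC : ∀ s a, h s a ≤ C)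
    (s : S) (a : A) :
    Summable (fun t : ℕ => M.disc ^ t * (M.stateDist π t s * π s a * h s a)) := by
  have hC0 : 0 ≤ C := le_trans (hh0 s a) (hhC s a)
  apply Summable.of_nonneg_of_le
  · intro t
    exact mul_nonneg (pow_nonneg M.disc_pos.le t)
      (mul_nonneg (mul_nonneg (stateDist_nonneg M π hπ t s) (hπ.1 s a)) (hh0 s a))
  · intro t
    show M.disc ^ t * (M.stateDist π t s * π s a * h s a) ≤ C * M.disc ^ t
    rw [mul_comm C (M.disc ^ t)]
    apply mul_le_mul_of_nonneg_left _ (pow_nonneg M.disc_pos.le t)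
    calc M.stateDist π t s * π s a * h s a ≤ 1 * 1 * C := by
          apply mul_le_mul (mul_le_mul (stateDist_le_one M π hπ t s) (pi_le_one π hπ s a)
            (hπ.1 s a) zero_le_one) (hhC s a) (hh0 s a) (by norm_num)
      _ = C := by ring
  · exact (summable_geometric_of_lt_one M.disc_pos.le M.disc_lt_one).mul_left C

lemma sum_c_bounds (M : FinMDP S A) (π : S → A → ℝ) (hπ : IsPolicy π)
    (h : S → A → ℝ) (C : ℝ) (hh0 : ∀ s a, 0 ≤ h s a) (hhC : ∀ s a, h s a ≤ C) (t : ℕ) :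
    0 ≤ ∑ s, ∑ a, M.stateDist π t s * π s a * h s a ∧
      ∑ s, ∑ a, M.stateDist π t s * π s a * h s a ≤ C := by
  constructor
  · exact Finset.sum_nonneg fun s _ => Finset.sum_nonneg fun a _ =>
      mul_nonneg (mul_nonneg (stateDist_nonneg M π hπ t s) (hπ.1 s a)) (hh0 s a)
  · have key : ∑ s, ∑ a, M.stateDist π t s * π s a * h s a
        ≤ ∑ s, ∑ a, M.stateDist π t s * π s a * C := by
      apply Finset.sum_le_sum; intro s _
      apply Finset.sum_le_sum; intro a _
      exact mul_le_mul_of_nonneg_left (hhC s a)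
        (mul_nonneg (stateDist_nonneg M π hπ t s) (hπ.1 s a))
    have e : ∑ s, ∑ a, M.stateDist π t s * π s a * C
        = (∑ s, M.stateDist π t s * ∑ a, π s a) * C := by
      simp only [Finset.sum_mul, Finset.mul_sum, mul_assoc]
    rw [e] at key
    simp only [hπ.2, mul_one, stateDist_sum M π hπ, one_mul] at key
    exact key


/-- The representation of expectations under the occupancy measure. -/
lemma occ_sum_eq (M : FinMDP S A) (π : S → A → ℝ) (hπ : IsPolicy π)
    (h : S → A → ℝ) (C : ℝ) (hh0 : ∀ s a, 0 ≤ h s a) (hhC : ∀ s a, h s a ≤ C) :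
    ∑ s, ∑ a, M.occ π s a * h s a
      = (1 - M.disc) * ∑' t : ℕ, M.disc ^ t * ∑ s, ∑ a, M.stateDist π t s * π s a * h s a := by
  have hsum1 : ∀ s a, Summable (fun t : ℕ => M.disc ^ t * (M.stateDist π t s * π s a * h s a)) :=
    occ_summable M π hπ h C hh0 hhC
  have step1 : ∀ s a, M.occ π s a * h s a
      = (1 - M.disc) * ∑' t : ℕ, M.disc ^ t * (M.stateDist π t s * π s a * h s a) := by
    intro s a
    rw [FinMDP.occ, mul_assoc, ← tsum_mul_right]
    congr 1
    exact tsum_congr fun t => by ring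
  calc ∑ s, ∑ a, M.occ π s a * h s a
      = (1 - M.disc) * ∑ s, ∑ a, ∑' t : ℕ,
          M.disc ^ t * (M.stateDist π t s * π s a * h s a) := by
        simp only [step1, ← Finset.mul_sum]
    _ = (1 - M.disc) * ∑ s, ∑' t : ℕ, ∑ a,
          M.disc ^ t * (M.stateDist π t s * π s a * h s a) := by
        congr 1
        exact Finset.sum_congr rfl fun s _ => (Summable.tsum_finsetSum (fun a _ => hsum1 s a)).symm
    _ = (1 - M.disc) * ∑' t : ℕ, ∑ s, ∑ a,
          M.disc ^ t * (M.stateDist π t s * π s a * h s a) := by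
        congr 1
        exact (Summable.tsum_finsetSum (fun s _ => (hasSum_sum (fun a _ => (hsum1 s a).hasSum)).summable)).symm
    _ = (1 - M.disc) * ∑' t : ℕ, M.disc ^ t * ∑ s, ∑ a,
          M.stateDist π t s * π s a * h s a := by
        congr 1
        exact tsum_congr fun t => by simp only [← Finset.mul_sum]

lemma dpi_sum (M : FinMDP S A) (π : S → A → ℝ) (hπ : IsPolicy π) (t : ℕ) :
    ∑ s, ∑ a, M.stateDist π t s * π s a = 1 := by
  simp only [← Finset.mul_sum, hπ.2, mul_one]
  exact stateDist_sum M π hπ t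

lemma occ_nonneg (M : FinMDP S A) (π : S → A → ℝ) (hπ : IsPolicy π) (s : S) (a : A) :
    0 ≤ M.occ π s a := by
  have hγ1 : (0:ℝ) ≤ 1 - M.disc := by linarith [M.disc_lt_one]
  exact mul_nonneg hγ1 (tsum_nonneg fun t =>
    mul_nonneg (mul_nonneg (pow_nonneg M.disc_pos.le t) (stateDist_nonneg M π hπ t s))
      (hπ.1 s a))

lemma occ_total (M : FinMDP S A) (π : S → A → ℝ) (hπ : IsPolicy π) :
    ∑ s, ∑ a, M.occ π s a = 1 := by
  have h := occ_sum_eq M π hπ (fun _ _ => (1:ℝ)) 1 (fun _ _ => zero_le_one)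
    (fun _ _ => le_refl 1)
  simp only [mul_one] at h
  rw [h]
  have e : ∀ t : ℕ, M.disc ^ t * ∑ s, ∑ a, M.stateDist π t s * π s a = M.disc ^ t :=
    fun t => by rw [dpi_sum M π hπ t, mul_one]
  rw [tsum_congr e, tsum_geometric_of_lt_one M.disc_pos.le M.disc_lt_one]
  have : (1:ℝ) - M.disc ≠ 0 := by linarith [M.disc_lt_one]
  field_simp

lemma tsum_shift_le (γ : ℝ) (hγ0 : 0 < γ) (hγ1 : γ < 1) (c : ℕ → ℝ) (C : ℝ)
    (hc0 : ∀ t, 0 ≤ c t) (hcC : ∀ t, c t ≤ C) :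
    γ * ∑' t : ℕ, γ ^ t * c (t + 1) ≤ ∑' t : ℕ, γ ^ t * c t := by
  have hu : Summable (fun t : ℕ => γ ^ t * c t) := by
    apply Summable.of_nonneg_of_le
    · exact fun t => mul_nonneg (pow_nonneg hγ0.le t) (hc0 t)
    · intro t
      show γ ^ t * c t ≤ C * γ ^ t
      rw [mul_comm C (γ ^ t)]
      exact mul_le_mul_of_nonneg_left (hcC t) (pow_nonneg hγ0.le t)
    · exact (summable_geometric_of_lt_one hγ0.le hγ1).mul_left C
  have hu' : Summable (fun t : ℕ => γ ^ t * c (t + 1)) := by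
    have h2 : Summable (fun t : ℕ => γ ^ (t + 1) * c (t + 1)) :=
      (summable_nat_add_iff 1).mpr hu
    have h3 : Summable (fun t : ℕ => γ⁻¹ * (γ ^ (t + 1) * c (t + 1))) := h2.mul_left _
    apply h3.congr
    intro t
    rw [pow_succ]
    field_simp
  have key : γ * ∑' t : ℕ, γ ^ t * c (t + 1) = ∑' t : ℕ, γ ^ (t + 1) * c (t + 1) := by
    rw [← tsum_mul_left]
    exact tsum_congr fun t => by rw [pow_succ]; ring
  rw [key, Summable.tsum_eq_zero_add hu]
  have h0 : 0 ≤ γ ^ 0 * c 0 := mul_nonneg (pow_nonneg hγ0.le 0) (hc0 0)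
  linarith

lemma flow (M : FinMDP S A) (π : S → A → ℝ) (hπ : IsPolicy π)
    (h : S → A → ℝ) (C : ℝ) (hh0 : ∀ s a, 0 ≤ h s a) (hhC : ∀ s a, h s a ≤ C) :
    M.disc * ∑ s, ∑ a, M.occ π s a * (∑ s', M.P s a s' * ∑ a', π s' a' * h s' a')
      ≤ ∑ s, ∑ a, M.occ π s a * h s a := by
  have hγ1 : (0:ℝ) < 1 - M.disc := by linarith [M.disc_lt_one]
  have hΦ0 : ∀ s a : S, True := fun _ _ => trivial
  have hPhi0 : ∀ s a, 0 ≤ (fun s a => ∑ s', M.P s a s' * ∑ a', π s' a' * h s' a') s a := by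
    intro s a
    simp only [exp_eq]
    exact wsum_nonneg _ _ (wt_nonneg M π hπ s a) (fun p => hh0 p.1 p.2)
  have hPhiC : ∀ s a, (fun s a => ∑ s', M.P s a s' * ∑ a', π s' a' * h s' a') s a ≤ C := by
    intro s a
    simp only [exp_eq]
    exact wsum_le _ _ (wt_nonneg M π hπ s a) (wt_sum_one M π hπ s a) C (fun p => hhC p.1 p.2)
  have repr1 := occ_sum_eq M π hπ _ C hPhi0 hPhiC
  -- finite rearrangement: inner expectation shifts the state distribution by one step
  have sw : ∀ (F : S → A → S → ℝ), ∑ s, ∑ a, ∑ s', F s a s' = ∑ s', ∑ s, ∑ a, F s a s' := by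
    intro F
    calc ∑ s, ∑ a, ∑ s', F s a s' = ∑ s, ∑ s', ∑ a, F s a s' :=
          Finset.sum_congr rfl fun s _ => Finset.sum_comm
      _ = ∑ s', ∑ s, ∑ a, F s a s' := Finset.sum_comm
  have rearr : ∀ t : ℕ, ∑ s, ∑ a, M.stateDist π t s * π s a *
        (∑ s', M.P s a s' * ∑ a', π s' a' * h s' a')
      = ∑ s, ∑ a, M.stateDist π (t + 1) s * π s a * h s a := by
    intro t
    have expand : ∀ s a, M.stateDist π t s * π s a *
          (∑ s', M.P s a s' * ∑ a', π s' a' * h s' a')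
        = ∑ s', M.stateDist π t s * π s a * M.P s a s' * (∑ a', π s' a' * h s' a') := by
      intro s a
      rw [Finset.mul_sum]
      exact Finset.sum_congr rfl fun s' _ => by ring
    calc ∑ s, ∑ a, M.stateDist π t s * π s a * (∑ s', M.P s a s' * ∑ a', π s' a' * h s' a')
        = ∑ s, ∑ a, ∑ s', M.stateDist π t s * π s a * M.P s a s' *
            (∑ a', π s' a' * h s' a') := by simp only [expand]
      _ = ∑ s', ∑ s, ∑ a, M.stateDist π t s * π s a * M.P s a s' *
            (∑ a', π s' a' * h s' a') := sw _
      _ = ∑ s', (∑ s, ∑ a, M.stateDist π t s * π s a * M.P s a s') *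
            (∑ a', π s' a' * h s' a') := by simp only [← Finset.sum_mul]
      _ = ∑ s', M.stateDist π (t + 1) s' * ∑ a', π s' a' * h s' a' := rfl
      _ = ∑ s', ∑ a', M.stateDist π (t + 1) s' * π s' a' * h s' a' := by
          simp only [Finset.mul_sum, mul_assoc]
  rw [repr1, tsum_congr fun t => by rw [rearr t]]
  rw [occ_sum_eq M π hπ h C hh0 hhC]
  rw [mul_comm (M.disc) _, mul_assoc, mul_comm _ M.disc]
  apply mul_le_mul_of_nonneg_left _ hγ1.le
  exact tsum_shift_le M.disc M.disc_pos M.disc_lt_one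
    (fun t => ∑ s, ∑ a, M.stateDist π t s * π s a * h s a) C
    (fun t => (sum_c_bounds M π hπ h C hh0 hhC t).1)
    (fun t => (sum_c_bounds M π hπ h C hh0 hhC t).2)

/-- Approximate-backup error recursion. -/
theorem stmt8 (M : FinMDP S A) (π Q : S → A → ℝ) (hπ : IsPolicy π) (hQ : M.IsQ π Q)
    (εbe : ℝ) (hεbe0 : 0 ≤ εbe) (hεbe1 : εbe ≤ 2 / (1 - M.disc))
    (f' g : S → A → ℝ)
    (hf'mem : ∀ s a, f' s a ∈ Set.Icc 0 (1 / (1 - M.disc)))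
    (hgmem : ∀ s a, g s a ∈ Set.Icc 0 (1 / (1 - M.disc)))
    (hg : ∀ s a, |g s a - M.bellman π f' s a| ≤ εbe) :
    ∑ s, ∑ a, M.occ π s a * (g s a - Q s a) ^ 2
      ≤ 4 * εbe / (1 - M.disc) + M.disc * ∑ s, ∑ a, M.occ π s a * (f' s a - Q s a) ^ 2 := by
  have hγ := M.disc_pos
  have hγlt := M.disc_lt_one
  have hγ1 : (0:ℝ) < 1 - M.disc := by linarith
  have hB0 : (0:ℝ) < 1 / (1 - M.disc) := by positivity
  have hQb := q_bounds M π Q hπ hQ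
  have hfQ : ∀ s a, |f' s a - Q s a| ≤ 1 / (1 - M.disc) := by
    intro s a
    obtain ⟨h1, h2⟩ := hf'mem s a
    obtain ⟨h3, h4⟩ := hQb s a
    rw [abs_le]
    constructor <;> linarith
  have hsq : ∀ s a, (f' s a - Q s a) ^ 2 ≤ (1 / (1 - M.disc)) ^ 2 := by
    intro s a
    have h1 := abs_le.mp (hfQ s a)
    nlinarith [h1.1, h1.2]
  -- pointwise bound
  have key : ∀ s a, (g s a - Q s a) ^ 2 ≤ 4 * εbe / (1 - M.disc)
      + M.disc ^ 2 * ∑ s', M.P s a s' * ∑ a', π s' a' * (f' s' a' - Q s' a') ^ 2 := by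
    intro s a
    have hδ : |g s a - M.bellman π f' s a| ≤ εbe := hg s a
    have hsub : ∑ p : S × A, M.wt π s a p * (f' p.1 p.2 - Q p.1 p.2)
        = (∑ p : S × A, M.wt π s a p * f' p.1 p.2)
          - ∑ p : S × A, M.wt π s a p * Q p.1 p.2 := by
      rw [← Finset.sum_sub_distrib]
      exact Finset.sum_congr rfl fun p _ => by ring
    have he_eq : M.bellman π f' s a - Q s a
        = M.disc * ∑ p : S × A, M.wt π s a p * (f' p.1 p.2 - Q p.1 p.2) := by
      rw [hQ s a, hsub]
      simp only [FinMDP.bellman, exp_eq M π s a]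
      ring
    have he_abs : |M.bellman π f' s a - Q s a| ≤ M.disc * (1 / (1 - M.disc)) := by
      rw [he_eq, abs_mul, abs_of_pos hγ]
      exact mul_le_mul_of_nonneg_left
        (wsum_abs_le _ _ (wt_nonneg M π hπ s a) (wt_sum_one M π hπ s a) _
          (fun p => hfQ p.1 p.2)) hγ.le
    have he_sq : (M.bellman π f' s a - Q s a) ^ 2
        ≤ M.disc ^ 2 * ∑ s', M.P s a s' * ∑ a', π s' a' * (f' s' a' - Q s' a') ^ 2 := by
      rw [he_eq, mul_pow]
      apply mul_le_mul_of_nonneg_left _ (sq_nonneg M.disc)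
      have hj := wsum_jensen (M.wt π s a) (fun p : S × A => f' p.1 p.2 - Q p.1 p.2)
        (wt_nonneg M π hπ s a) (wt_sum_one M π hπ s a)
      refine le_trans hj ?_
      have := exp_eq M π s a (fun s a => (f' s a - Q s a) ^ 2)
      rw [this]
    have expand : g s a - Q s a
        = (g s a - M.bellman π f' s a) + (M.bellman π f' s a - Q s a) := by ring
    have habs := abs_le.mp hδ
    have habs2 := abs_le.mp he_abs
    rw [expand]
    set d := g s a - M.bellman π f' s a with hd
    set E := M.bellman π f' s a - Q s a with hE
    clear_value d E
    have t2 : d * E ≤ εbe * (M.disc * (1 / (1 - M.disc))) := by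
      calc d * E ≤ |d * E| := le_abs_self _
        _ = |d| * |E| := abs_mul _ _
        _ ≤ εbe * (M.disc * (1 / (1 - M.disc))) :=
            mul_le_mul hδ he_abs (abs_nonneg _) hεbe0
    have t2' : d * E ≤ εbe * (1 / (1 - M.disc)) := by
      refine le_trans t2 ?_
      apply mul_le_mul_of_nonneg_left _ hεbe0
      nlinarith
    have t1 : d ^ 2 ≤ εbe * (2 * (1 / (1 - M.disc))) := by
      have h1 : d ^ 2 ≤ εbe ^ 2 := sq_le_sq' (by linarith [habs.1]) habs.2
      have h2 : εbe ^ 2 ≤ εbe * (2 / (1 - M.disc)) := by nlinarith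
      have h3 : εbe * (2 / (1 - M.disc)) = εbe * (2 * (1 / (1 - M.disc))) := by ring
      linarith
    have hexp : (d + E) ^ 2 = d ^ 2 + 2 * (d * E) + E ^ 2 := by ring
    have hfin : 4 * εbe / (1 - M.disc) = 4 * (εbe * (1 / (1 - M.disc))) := by ring
    rw [hexp, hfin]
    linarith [he_sq]
  -- sum over the occupancy measure
  have step1 : ∑ s, ∑ a, M.occ π s a * (g s a - Q s a) ^ 2
      ≤ ∑ s, ∑ a, M.occ π s a * (4 * εbe / (1 - M.disc)
        + M.disc ^ 2 * ∑ s', M.P s a s' * ∑ a', π s' a' * (f' s' a' - Q s' a') ^ 2) := by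
    apply Finset.sum_le_sum
    intro s _
    apply Finset.sum_le_sum
    intro a _
    exact mul_le_mul_of_nonneg_left (key s a) (occ_nonneg M π hπ s a)
  have split : ∀ s a, M.occ π s a * (4 * εbe / (1 - M.disc)
        + M.disc ^ 2 * ∑ s', M.P s a s' * ∑ a', π s' a' * (f' s' a' - Q s' a') ^ 2)
      = 4 * εbe / (1 - M.disc) * M.occ π s a
        + M.disc ^ 2 * (M.occ π s a
          * ∑ s', M.P s a s' * ∑ a', π s' a' * (f' s' a' - Q s' a') ^ 2) := by
    intro s a
    ring
  have step2 : ∑ s, ∑ a, M.occ π s a * (4 * εbe / (1 - M.disc)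
        + M.disc ^ 2 * ∑ s', M.P s a s' * ∑ a', π s' a' * (f' s' a' - Q s' a') ^ 2)
      = 4 * εbe / (1 - M.disc)
        + M.disc ^ 2 * ∑ s, ∑ a, M.occ π s a
            * ∑ s', M.P s a s' * ∑ a', π s' a' * (f' s' a' - Q s' a') ^ 2 := by
    simp only [split, Finset.sum_add_distrib, ← Finset.mul_sum]
    rw [occ_total M π hπ, mul_one]
  have hflow := flow M π hπ (fun s a => (f' s a - Q s a) ^ 2) ((1 / (1 - M.disc)) ^ 2)
    (fun s a => sq_nonneg _) hsq
  have hflow2 : M.disc ^ 2 * ∑ s, ∑ a, M.occ π s a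
        * ∑ s', M.P s a s' * ∑ a', π s' a' * (f' s' a' - Q s' a') ^ 2
      ≤ M.disc * ∑ s, ∑ a, M.occ π s a * (f' s a - Q s a) ^ 2 := by
    have h1 := mul_le_mul_of_nonneg_left hflow hγ.le
    calc M.disc ^ 2 * ∑ s, ∑ a, M.occ π s a
          * ∑ s', M.P s a s' * ∑ a', π s' a' * (f' s' a' - Q s' a') ^ 2
        = M.disc * (M.disc * ∑ s, ∑ a, M.occ π s a
          * ∑ s', M.P s a s' * ∑ a', π s' a' * (f' s' a' - Q s' a') ^ 2) := by ring
      _ ≤ M.disc * ∑ s, ∑ a, M.occ π s a * (f' s a - Q s a) ^ 2 := h1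
  calc ∑ s, ∑ a, M.occ π s a * (g s a - Q s a) ^ 2
      ≤ 4 * εbe / (1 - M.disc)
        + M.disc ^ 2 * ∑ s, ∑ a, M.occ π s a
            * ∑ s', M.P s a s' * ∑ a', π s' a' * (f' s' a' - Q s' a') ^ 2 := by
        rw [← step2]; exact step1
    _ ≤ 4 * εbe / (1 - M.disc) + M.disc * ∑ s, ∑ a, M.occ π s a * (f' s a - Q s a) ^ 2 := by
        linarith [hflow2]
end
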